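/- Primal solution from dual: if g : ℝⁿ → ℝ is strongly convex and w⋆ maximizes −g*(−w) over conv(𝒱) for a nonempty finite set 𝒱 ⊆ ℝⁿ, then x⋆ = ∇g*(−w⋆) minimizes g(x) + max_{w ∈ 𝒱} ⟨w, x⟩ over ℝⁿ. -/

import Mathlib

open scoped RealInnerProductSpace

/-- The Fenchel conjugate (real-valued; finite when `g` is strongly convex). -/
noncomputable def fenchel {n : ℕ} (g : EuclideanSpace ℝ (Fin n) → ℝ)
    (w : EuclideanSpace ℝ (Fin n)) : ℝ :=
  ⨆ x, (⟪w, x⟫ - g x)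

/-- Lower bound for a strongly convex function. -/
lemma sc_lower_bound {n : ℕ} (g : EuclideanSpace ℝ (Fin n) → ℝ)
    {α : ℝ} (hα : 0 < α)
    (hcvx : ConvexOn ℝ Set.univ (fun x => g x - α / 2 * ‖x‖ ^ 2)) :
    ∃ C : ℝ, 0 ≤ C ∧ ∀ x, α / 2 * ‖x‖ ^ 2 - C * (‖x‖ + 1) ≤ g x := by
  set h : EuclideanSpace ℝ (Fin n) → ℝ := fun x => g x - α / 2 * ‖x‖ ^ 2 with hh
  have hgc : ConvexOn ℝ Set.univ g := by
    have hst : StrongConvexOn Set.univ α g := strongConvexOn_iff_convex.mpr hcvx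
    exact hst.convexOn (fun r => by positivity)
  have hgcont : Continuous g := by
    exact continuousOn_univ.mp (hgc.continuousOn isOpen_univ)
  have hhcont : Continuous h := by
    have : Continuous (fun x : EuclideanSpace ℝ (Fin n) => α / 2 * ‖x‖ ^ 2) := by
      continuity
    exact hgcont.sub this
  -- lower bound of h on the unit sphere
  obtain ⟨m, hm⟩ : ∃ m, ∀ x ∈ Metric.sphere (0 : EuclideanSpace ℝ (Fin n)) 1, m ≤ h x := by
    obtain ⟨m, hm⟩ := ((isCompact_sphere (0 : EuclideanSpace ℝ (Fin n)) 1).image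
      hhcont).bddBelow
    exact ⟨m, fun x hx => hm ⟨x, hx, rfl⟩⟩
  -- lower bound of g on the unit ball
  obtain ⟨b, hb⟩ : ∃ b, ∀ x ∈ Metric.closedBall (0 : EuclideanSpace ℝ (Fin n)) 1, b ≤ g x := by
    obtain ⟨b, hb⟩ := ((isCompact_closedBall (0 : EuclideanSpace ℝ (Fin n)) 1).image
      hgcont).bddBelow
    exact ⟨b, fun x hx => hb ⟨x, hx, rfl⟩⟩
  -- linear lower bound of h outside the ball
  have hlin : ∀ x : EuclideanSpace ℝ (Fin n), 1 ≤ ‖x‖ →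
      -((|m| + |h 0|) * ‖x‖) ≤ h x := by
    intro x hx
    have hx0 : 0 < ‖x‖ := lt_of_lt_of_le one_pos hx
    set t : ℝ := ‖x‖⁻¹ with ht
    have ht0 : 0 < t := inv_pos.mpr hx0
    have ht1 : t ≤ 1 := by
      rw [ht]
      exact inv_le_one_of_one_le₀ hx
    have hmem : t • x ∈ Metric.sphere (0 : EuclideanSpace ℝ (Fin n)) 1 := by
      simp [norm_smul, abs_of_pos ht0, ht, inv_mul_cancel₀ (ne_of_gt hx0)]
    have hcv := hcvx.2 (Set.mem_univ (0 : EuclideanSpace ℝ (Fin n))) (Set.mem_univ x)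
      (by linarith : (0:ℝ) ≤ 1 - t) (le_of_lt ht0) (by ring)
    rw [smul_zero, zero_add] at hcv
    have h1 : m ≤ h (t • x) := hm _ hmem
    have h2 : h (t • x) ≤ (1 - t) * h 0 + t * h x := by
      simpa [smul_eq_mul] using hcv
    -- so m ≤ (1-t) h 0 + t h x, hence h x ≥ (m - (1-t) h0)/t
    have h3 : m - (1 - t) * h 0 ≤ t * h x := by linarith
    have h4 : ‖x‖ * (m - (1 - t) * h 0) ≤ h x := by
      have := mul_le_mul_of_nonneg_left h3 (le_of_lt hx0)
      rwa [← mul_assoc, mul_inv_cancel₀ (ne_of_gt hx0), one_mul] at this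
    have h5 : -((|m| + |h 0|) * ‖x‖) ≤ ‖x‖ * (m - (1 - t) * h 0) := by
      have hm1 : -|m| ≤ m := neg_abs_le m
      have hm2 : (1 - t) * h 0 ≤ |h 0| := by
        calc (1 - t) * h 0 ≤ (1 - t) * |h 0| := by
              exact mul_le_mul_of_nonneg_left (le_abs_self _) (by linarith)
          _ ≤ 1 * |h 0| := by
              exact mul_le_mul_of_nonneg_right (by linarith) (abs_nonneg _)
          _ = |h 0| := one_mul _
      nlinarith [abs_nonneg m, abs_nonneg (h 0)]
    linarith
  refine ⟨|m| + |h 0| + |α / 2 - b|, by positivity, fun x => ?_⟩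
  by_cases hx : 1 ≤ ‖x‖
  · have h1 : -((|m| + |h 0|) * ‖x‖) ≤ g x - α / 2 * ‖x‖ ^ 2 := hlin x hx
    have hnn : (0:ℝ) ≤ ‖x‖ := norm_nonneg x
    have h3 : (|m| + |h 0|) * ‖x‖ ≤ (|m| + |h 0| + |α / 2 - b|) * (‖x‖ + 1) := by
      nlinarith [abs_nonneg (α/2 - b), abs_nonneg m, abs_nonneg (h 0)]
    linarith
  · push_neg at hx
    have h1 : b ≤ g x := hb x (by simpa [Metric.mem_closedBall, dist_zero_right] using le_of_lt hx)
    have h2 : α / 2 - b ≤ |α / 2 - b| := le_abs_self _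
    have hnn : (0:ℝ) ≤ ‖x‖ := norm_nonneg x
    have hx2 : ‖x‖ ^ 2 ≤ 1 := by nlinarith
    have hsq : α / 2 * ‖x‖ ^ 2 ≤ α / 2 := by
      calc α / 2 * ‖x‖ ^ 2 ≤ α / 2 * 1 := by
            exact mul_le_mul_of_nonneg_left hx2 (by positivity)
        _ = α / 2 := mul_one _
    have h3 : |α / 2 - b| ≤ (|m| + |h 0| + |α / 2 - b|) * (‖x‖ + 1) := by
      nlinarith [abs_nonneg m, abs_nonneg (h 0), abs_nonneg (α/2 - b)]
    nlinarith [h1, h2, h3, hsq]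

/-- The sup defining the Fenchel conjugate of a strongly convex function is attained. -/
lemma fenchel_exists_max {n : ℕ} (g : EuclideanSpace ℝ (Fin n) → ℝ)
    {α : ℝ} (hα : 0 < α)
    (hcvx : ConvexOn ℝ Set.univ (fun x => g x - α / 2 * ‖x‖ ^ 2))
    (u : EuclideanSpace ℝ (Fin n)) :
    ∃ z, (∀ x, ⟪u, x⟫ - g x ≤ ⟪u, z⟫ - g z) ∧ fenchel g u = ⟪u, z⟫ - g z := by
  obtain ⟨C, hC0, hC⟩ := sc_lower_bound g hα hcvx
  have hgc : ConvexOn ℝ Set.univ g := by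
    have hst : StrongConvexOn Set.univ α g := strongConvexOn_iff_convex.mpr hcvx
    exact hst.convexOn (fun r => by positivity)
  have hgcont : Continuous g :=
    continuousOn_univ.mp (hgc.continuousOn isOpen_univ)
  have hfcont : Continuous (fun x : EuclideanSpace ℝ (Fin n) => ⟪u, x⟫ - g x) := by
    exact (continuous_const.inner continuous_id).sub hgcont
  obtain ⟨B, hB⟩ : ∃ B : ℝ, B = |⟪u, (0 : EuclideanSpace ℝ (Fin n))⟫ - g 0| := ⟨_, rfl⟩
  have hB0 : (0:ℝ) ≤ B := hB ▸ abs_nonneg _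
  have hB1 : -B ≤ ⟪u, (0 : EuclideanSpace ℝ (Fin n))⟫ - g 0 := hB ▸ neg_abs_le _
  obtain ⟨R, hR⟩ : ∃ R : ℝ, R = 1 + (2 / α) * (‖u‖ + C + C + B + 1) := ⟨_, rfl⟩
  have hpos : (0:ℝ) ≤ (2 / α) * (‖u‖ + C + C + B + 1) := by positivity
  have hR1 : (1:ℝ) ≤ R := by rw [hR]; linarith
  have hR0 : (0:ℝ) ≤ R := by linarith
  have hout : ∀ x : EuclideanSpace ℝ (Fin n), R < ‖x‖ →
      ⟪u, x⟫ - g x ≤ (⟪u, (0 : EuclideanSpace ℝ (Fin n))⟫ - g 0) - 1 := by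
    intro x hx
    have hnn : (0:ℝ) ≤ ‖x‖ := norm_nonneg x
    have hx1 : 1 ≤ ‖x‖ := le_trans hR1 hx.le
    have h1 : ⟪u, x⟫ ≤ ‖u‖ * ‖x‖ := real_inner_le_norm u x
    have h2 : α / 2 * ‖x‖ ^ 2 - C * (‖x‖ + 1) ≤ g x := hC x
    have h4 : ‖u‖ + C + C + B + 1 ≤ α / 2 * ‖x‖ := by
      have hα2 : (0:ℝ) < α / 2 := by positivity
      have hm : α / 2 * R ≤ α / 2 * ‖x‖ := mul_le_mul_of_nonneg_left hx.le hα2.le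
      have hRe : α / 2 * R = α / 2 + (‖u‖ + C + C + B + 1) := by
        rw [hR]; field_simp
      linarith
    have h5 : (‖u‖ + C + C + B + 1) * ‖x‖ ≤ α / 2 * ‖x‖ ^ 2 := by
      have := mul_le_mul_of_nonneg_right h4 hnn
      nlinarith
    nlinarith [mul_le_mul_of_nonneg_left hx1 hB0, mul_le_mul_of_nonneg_left hx1 hC0,
      mul_le_mul_of_nonneg_left hx1 (norm_nonneg u)]
  obtain ⟨z, hzK, hz⟩ := (isCompact_closedBall (0 : EuclideanSpace ℝ (Fin n)) R).exists_isMaxOn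
    ⟨0, by simpa [Metric.mem_closedBall] using hR0⟩ hfcont.continuousOn
  have h0K : (0 : EuclideanSpace ℝ (Fin n)) ∈
      Metric.closedBall (0 : EuclideanSpace ℝ (Fin n)) R := by
    simpa [Metric.mem_closedBall] using hR0
  have hmax : ∀ x, ⟪u, x⟫ - g x ≤ ⟪u, z⟫ - g z := by
    intro x
    by_cases hx : ‖x‖ ≤ R
    · exact hz (by simpa [Metric.mem_closedBall, dist_zero_right] using hx)
    · push_neg at hx
      have h7 := hout x hx
      have h0 : ⟪u, (0 : EuclideanSpace ℝ (Fin n))⟫ - g 0 ≤ ⟪u, z⟫ - g z := hz h0K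
      linarith
  refine ⟨z, hmax, ?_⟩
  have hbdd : BddAbove (Set.range (fun x : EuclideanSpace ℝ (Fin n) => ⟪u, x⟫ - g x)) := by
    refine ⟨⟪u, z⟫ - g z, ?_⟩
    rintro _ ⟨x, rfl⟩
    exact hmax x
  exact le_antisymm (ciSup_le hmax) (le_ciSup hbdd z)

/-- Directional derivative along a line from a gradient. -/
lemma hasDerivAt_line {n : ℕ} {f : EuclideanSpace ℝ (Fin n) → ℝ}
    {a x : EuclideanSpace ℝ (Fin n)} (hf : HasGradientAt f a x)
    (v : EuclideanSpace ℝ (Fin n)) :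
    HasDerivAt (fun t : ℝ => f (x + t • v)) ⟪a, v⟫ 0 := by
  have h1 : HasDerivAt (fun t : ℝ => x + t • v) v 0 := by
    simpa using ((hasDerivAt_id (0:ℝ)).smul_const v).const_add x
  have h0 : HasFDerivAt f (InnerProductSpace.toDual ℝ _ a) (x + (0:ℝ) • v) := by
    simpa using hf.hasFDerivAt
  have h2 := h0.comp_hasDerivAt (0:ℝ) h1
  simp only [InnerProductSpace.toDual_apply_apply] at h2
  exact h2

/-- Right-sided slope bound. -/
lemma deriv_ge_right {ψ : ℝ → ℝ} {d c : ℝ} (hd : HasDerivAt ψ d 0)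
    (h : ∀ t : ℝ, 0 < t → t ≤ 1 → ψ 0 + c * t ≤ ψ t) : c ≤ d := by
  have hs : Filter.Tendsto (slope ψ 0) (nhdsWithin 0 {(0:ℝ)}ᶜ) (nhds d) :=
    hasDerivAt_iff_tendsto_slope.mp hd
  have h2 : Filter.Tendsto (slope ψ 0) (nhdsWithin 0 (Set.Ioi 0)) (nhds d) :=
    hs.mono_left (nhdsWithin_mono _ (fun t ht => ne_of_gt ht))
  refine ge_of_tendsto h2 ?_
  filter_upwards [Ioc_mem_nhdsGT_of_mem (Set.mem_Ico.mpr ⟨le_refl 0, zero_lt_one⟩)] with t ht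
  have h3 := h t ht.1 ht.2
  rw [slope_def_field, le_div_iff₀ (by simpa using ht.1 : (0:ℝ) < t - 0)]
  linarith

/-- Left-sided slope bound. -/
lemma deriv_le_left {ψ : ℝ → ℝ} {d c : ℝ} (hd : HasDerivAt ψ d 0)
    (h : ∀ t : ℝ, -1 ≤ t → t < 0 → ψ 0 + c * t ≤ ψ t) : d ≤ c := by
  have hs : Filter.Tendsto (slope ψ 0) (nhdsWithin 0 {(0:ℝ)}ᶜ) (nhds d) :=
    hasDerivAt_iff_tendsto_slope.mp hd
  have h2 : Filter.Tendsto (slope ψ 0) (nhdsWithin 0 (Set.Iio 0)) (nhds d) :=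
    hs.mono_left (nhdsWithin_mono _ (fun t ht => ne_of_lt ht))
  refine le_of_tendsto h2 ?_
  filter_upwards [Ico_mem_nhdsLT_of_mem (Set.mem_Ioc.mpr ⟨neg_one_lt_zero, le_refl 0⟩)] with t ht
  have h3 := h t ht.1 ht.2
  rw [slope_def_field, div_le_iff_of_neg (by simpa using ht.2 : t - 0 < 0)]
  linarith

/-- Primal solution from dual: if `g : ℝⁿ → ℝ` is closed, proper and strongly convex and
`w⋆` maximizes `-g*(-w)` over `conv 𝒱` for a nonempty finite `𝒱 ⊆ ℝⁿ`, then
`x⋆ = ∇g*(-w⋆)` minimizes `g x + max_{w ∈ 𝒱} ⟪w, x⟫` over `ℝⁿ`. -/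
theorem stmt7 {n : ℕ} (g : EuclideanSpace ℝ (Fin n) → ℝ)
    (hlsc : LowerSemicontinuous g)
    (hsc : ∃ α > (0 : ℝ), ConvexOn ℝ Set.univ (fun x => g x - α / 2 * ‖x‖ ^ 2))
    (V : Finset (EuclideanSpace ℝ (Fin n))) (hV : V.Nonempty)
    (wstar : EuclideanSpace ℝ (Fin n))
    (hwmem : wstar ∈ convexHull ℝ (V : Set (EuclideanSpace ℝ (Fin n))))
    (hwmax : ∀ w ∈ convexHull ℝ (V : Set (EuclideanSpace ℝ (Fin n))),
        -(fenchel g (-w)) ≤ -(fenchel g (-wstar)))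
    (xstar : EuclideanSpace ℝ (Fin n))
    (hxgrad : HasGradientAt (fenchel g) xstar (-wstar)) :
    ∀ y, g xstar + V.sup' hV (fun w => ⟪w, xstar⟫) ≤
         g y + V.sup' hV (fun w => ⟪w, y⟫) := by
  obtain ⟨α, hα, hcvx⟩ := hsc
  have key := fenchel_exists_max g hα hcvx
  have hFY : ∀ (v x : EuclideanSpace ℝ (Fin n)), ⟪v, x⟫ - g x ≤ fenchel g v := by
    intro v x
    obtain ⟨z', h1, h2⟩ := key v
    rw [h2]; exact h1 x
  obtain ⟨z, hzmax, hzeq⟩ := key (-wstar)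
  -- subgradient property of the maximizer z
  have hsub : ∀ (v : EuclideanSpace ℝ (Fin n)) (t : ℝ),
      fenchel g (-wstar) + t * ⟪v, z⟫ ≤ fenchel g (-wstar + t • v) := by
    intro v t
    have h1 := hFY (-wstar + t • v) z
    have h2 : ⟪-wstar + t • v, z⟫ = ⟪-wstar, z⟫ + t * ⟪v, z⟫ := by
      rw [inner_add_left, real_inner_smul_left]
    rw [h2] at h1
    rw [hzeq]
    linarith
  -- the maximizer is xstar
  have hzx : z = xstar := by
    apply ext_inner_left ℝ
    intro v
    have hd := hasDerivAt_line hxgrad v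
    have hψ0 : fenchel g (-wstar + (0:ℝ) • v) = fenchel g (-wstar) := by
      norm_num
    have hge : ⟪v, z⟫ ≤ ⟪xstar, v⟫ := by
      refine deriv_ge_right hd (fun t ht0 ht1 => ?_)
      rw [hψ0]
      calc fenchel g (-wstar) + ⟪v, z⟫ * t
          = fenchel g (-wstar) + t * ⟪v, z⟫ := by ring
        _ ≤ fenchel g (-wstar + t • v) := hsub v t
    have hle : ⟪xstar, v⟫ ≤ ⟪v, z⟫ := by
      refine deriv_le_left hd (fun t ht0 ht1 => ?_)
      rw [hψ0]
      calc fenchel g (-wstar) + ⟪v, z⟫ * t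
          = fenchel g (-wstar) + t * ⟪v, z⟫ := by ring
        _ ≤ fenchel g (-wstar + t • v) := hsub v t
    have e1 : ⟪xstar, v⟫ = ⟪v, xstar⟫ := real_inner_comm _ _
    rw [e1] at hge hle
    exact le_antisymm hge hle
  -- Fenchel-Young equality at xstar
  have hfen : fenchel g (-wstar) = ⟪-wstar, xstar⟫ - g xstar := hzx ▸ hzeq
  -- variational inequality
  have hvar : ∀ w ∈ V, ⟪w, xstar⟫ ≤ ⟪wstar, xstar⟫ := by
    intro w hw
    have hwc : w ∈ convexHull ℝ (V : Set (EuclideanSpace ℝ (Fin n))) :=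
      subset_convexHull ℝ _ (Finset.mem_coe.mpr hw)
    have hd := hasDerivAt_line hxgrad (wstar - w)
    have hψ0 : fenchel g (-wstar + (0:ℝ) • (wstar - w)) = fenchel g (-wstar) := by
      norm_num
    have h0 : (0:ℝ) ≤ ⟪xstar, wstar - w⟫ := by
      refine deriv_ge_right (c := 0) hd (fun t ht0 ht1 => ?_)
      rw [hψ0, zero_mul, add_zero]
      have hpt : wstar + t • (w - wstar) ∈ convexHull ℝ (V : Set (EuclideanSpace ℝ (Fin n))) := by
        have hcc := (convex_convexHull ℝ (V : Set (EuclideanSpace ℝ (Fin n)))) hwmem hwc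
          (by linarith : (0:ℝ) ≤ 1 - t) ht0.le (by ring)
        have heq : (1 - t) • wstar + t • w = wstar + t • (w - wstar) := by
          rw [sub_smul, one_smul, smul_sub]; abel
        rwa [heq] at hcc
      have h1 := hwmax _ hpt
      have h2 : -(wstar + t • (w - wstar)) = -wstar + t • (wstar - w) := by
        rw [smul_sub, smul_sub]; abel
      rw [h2] at h1
      linarith
    have h3 : ⟪xstar, wstar - w⟫ = ⟪xstar, wstar⟫ - ⟪xstar, w⟫ := inner_sub_right _ _ _
    have e1 : ⟪w, xstar⟫ = ⟪xstar, w⟫ := real_inner_comm _ _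
    have e2 : ⟪wstar, xstar⟫ = ⟪xstar, wstar⟫ := real_inner_comm _ _
    rw [e1, e2]
    linarith
  -- the support function bound
  have hsup : ∀ y, ⟪wstar, y⟫ ≤ V.sup' hV (fun w => ⟪w, y⟫) := by
    intro y
    have hlin : IsLinearMap ℝ (fun w : EuclideanSpace ℝ (Fin n) => ⟪w, y⟫) :=
      ⟨fun a b => inner_add_left a b y, fun c a => real_inner_smul_left a y c⟩
    have hconv : convexHull ℝ (V : Set (EuclideanSpace ℝ (Fin n))) ⊆
        {w | ⟪w, y⟫ ≤ V.sup' hV (fun w => ⟪w, y⟫)} := by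
      apply convexHull_min
      · intro w hw
        exact Finset.le_sup' (fun w : EuclideanSpace ℝ (Fin n) => ⟪w, y⟫)
          (Finset.mem_coe.mp hw)
      · exact convex_halfSpace_le hlin _
    exact hconv hwmem
  intro y
  have h1 : V.sup' hV (fun w => ⟪w, xstar⟫) = ⟪wstar, xstar⟫ :=
    le_antisymm (Finset.sup'_le _ _ (fun w hw => hvar w hw)) (hsup xstar)
  have h2 : ⟪-wstar, xstar⟫ = -⟪wstar, xstar⟫ := inner_neg_left _ _
  have h3 := hFY (-wstar) y
  have h4 : ⟪-wstar, y⟫ = -⟪wstar, y⟫ := inner_neg_left _ _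
  have h5 := hsup y
  rw [h1]
  rw [h2] at hfen
  rw [h4] at h3
  linarith
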